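/- arXiv:0707.3619 — 4 statements merged into one kernel-verified Lean document; each statement's English description precedes it below -/
import Mathlib

section
/- The set of n×n simple unit-Monge matrices is closed under distance multiplication: if P_A, P_B are n×n permutation matrices and C = P_A^Σ ⊙ P_B^Σ (distance product), then there exists an n×n permutation matrix P_C with C = P_C^Σ. -/
/-- The permutation matrix of a permutation `σ` (rows and columns indexed by
odd half-integers `⟨0:n⟩`, represented by `Fin n`). -/
def PermMat {n : ℕ} (σ : Equiv.Perm (Fin n)) : Fin n → Fin n → ℤ :=
  fun i j => if σ i = j then 1 else 0

def distSum {m n : ℕ} (D : Fin m → Fin n → ℤ) (i : Fin (m+1)) (j : Fin (n+1)) : ℤ :=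
  ∑ p : Fin m, ∑ q : Fin n, if (i : ℕ) ≤ (p : ℕ) ∧ (q : ℕ) < (j : ℕ) then D p q else 0

def distProd {n : ℕ} (A B : Fin (n+1) → Fin (n+1) → ℤ) (i k : Fin (n+1)) : ℤ :=
  Finset.univ.inf' Finset.univ_nonempty (fun j => A i j + B j k)


/-- ℕ-indexed distribution "matrix" of a permutation. -/
def S {n : ℕ} (σ : Equiv.Perm (Fin n)) (i j : ℕ) : ℤ :=
  ∑ p : Fin n, if i ≤ (p : ℕ) ∧ (σ p : ℕ) < j then 1 else 0

lemma count_lt (n k : ℕ) :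
    (∑ p : Fin n, if (p : ℕ) < k then (1:ℤ) else 0) = (min k n : ℕ) := by
  induction n with
  | zero => simp
  | succ m ih =>
    rw [Fin.sum_univ_castSucc]
    simp only [Fin.coe_castSucc, Fin.val_last, ih]
    rcases lt_or_ge (m : ℕ) k with h | h
    · rw [if_pos h]
      have : min k (m+1) = m + 1 := by omega
      have h2 : min k m = m := by omega
      rw [this, h2]; push_cast; ring
    · rw [if_neg (by omega)]
      have : min k (m+1) = min k m := by omega
      rw [this]; ring

lemma count_ge (n i : ℕ) :
    (∑ p : Fin n, if i ≤ (p : ℕ) then (1:ℤ) else 0) = (n : ℤ) - (min i n : ℕ) := by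
  have : ∀ p : Fin n, (if i ≤ (p:ℕ) then (1:ℤ) else 0) = 1 - (if (p:ℕ) < i then 1 else 0) := by
    intro p; split_ifs <;> omega
  rw [Finset.sum_congr rfl (fun p _ => this p), Finset.sum_sub_distrib, count_lt]
  simp

lemma S_nonneg {n : ℕ} (σ : Equiv.Perm (Fin n)) (i j : ℕ) : 0 ≤ S σ i j :=
  Finset.sum_nonneg (fun p _ => by positivity)

lemma S_mono_j {n : ℕ} (σ : Equiv.Perm (Fin n)) (i : ℕ) {j j' : ℕ} (h : j ≤ j') :
    S σ i j ≤ S σ i j' :=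
  Finset.sum_le_sum (fun p _ => by split_ifs <;> omega)

lemma S_anti_i {n : ℕ} (σ : Equiv.Perm (Fin n)) {i i' : ℕ} (h : i ≤ i') (j : ℕ) :
    S σ i' j ≤ S σ i j :=
  Finset.sum_le_sum (fun p _ => by split_ifs <;> omega)

lemma S_step_i {n : ℕ} (σ : Equiv.Perm (Fin n)) (i j : ℕ) :
    S σ i j ≤ S σ (i+1) j + 1 := by
  unfold S
  rcases lt_or_ge i n with h | h
  · have key : ∀ p : Fin n, (if i ≤ (p:ℕ) ∧ (σ p : ℕ) < j then (1:ℤ) else 0)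
        ≤ (if i+1 ≤ (p:ℕ) ∧ (σ p : ℕ) < j then (1:ℤ) else 0)
          + (if p = ⟨i, h⟩ then 1 else 0) := by
      intro p
      rcases eq_or_ne p ⟨i, h⟩ with rfl | hne
      · simp only [Fin.val_mk, if_pos rfl]; split_ifs <;> omega
      · rw [if_neg hne]
        have hp : (p : ℕ) ≠ i := fun hc => hne (Fin.ext hc)
        split_ifs <;> omega
    calc (∑ p : Fin n, if i ≤ (p:ℕ) ∧ (σ p : ℕ) < j then (1:ℤ) else 0)
        ≤ ∑ p : Fin n, ((if i+1 ≤ (p:ℕ) ∧ (σ p : ℕ) < j then (1:ℤ) else 0)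
            + (if p = ⟨i, h⟩ then 1 else 0)) :=
          Finset.sum_le_sum (fun p _ => key p)
      _ = (∑ p : Fin n, if i+1 ≤ (p:ℕ) ∧ (σ p : ℕ) < j then (1:ℤ) else 0)
            + ∑ p : Fin n, (if p = ⟨i, h⟩ then (1:ℤ) else 0) :=
          Finset.sum_add_distrib
      _ ≤ _ := by
          rw [Finset.sum_ite_eq' Finset.univ (⟨i,h⟩ : Fin n) (fun _ => (1:ℤ))]
          simp
  · have z : ∀ p : Fin n, (if i ≤ (p:ℕ) ∧ (σ p : ℕ) < j then (1:ℤ) else 0) = 0 := by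
      intro p; rw [if_neg]; rintro ⟨h1, -⟩; have := p.2; omega
    rw [Finset.sum_congr rfl (fun p _ => z p)]
    have := S_nonneg σ (i+1) j
    unfold S at this
    simp only [Finset.sum_const_zero]
    omega

lemma S_monge {n : ℕ} (σ : Equiv.Perm (Fin n)) {i i' j j' : ℕ}
    (hi : i ≤ i') (hj : j ≤ j') :
    S σ i j + S σ i' j' ≤ S σ i j' + S σ i' j := by
  unfold S
  rw [← Finset.sum_add_distrib, ← Finset.sum_add_distrib]
  exact Finset.sum_le_sum (fun p _ => by split_ifs <;> omega)

lemma S_i0 {n : ℕ} (σ : Equiv.Perm (Fin n)) (i : ℕ) : S σ i 0 = 0 := by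
  unfold S; simp

lemma S_top {n : ℕ} (σ : Equiv.Perm (Fin n)) {i : ℕ} (h : n ≤ i) (j : ℕ) :
    S σ i j = 0 := by
  unfold S
  apply Finset.sum_eq_zero
  intro p _
  rw [if_neg]; rintro ⟨h1, -⟩; have := p.2; omega

lemma S_0j {n : ℕ} (σ : Equiv.Perm (Fin n)) {j : ℕ} (h : j ≤ n) :
    S σ 0 j = (j : ℤ) := by
  unfold S
  simp only [Nat.zero_le, true_and]
  rw [Equiv.sum_comp σ (fun q => if (q : ℕ) < j then (1:ℤ) else 0), count_lt]
  congr 1; omega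

lemma S_in {n : ℕ} (σ : Equiv.Perm (Fin n)) {i : ℕ} (h : i ≤ n) :
    S σ i n = (n : ℤ) - (i : ℤ) := by
  unfold S
  have : ∀ p : Fin n, (if i ≤ (p:ℕ) ∧ (σ p : ℕ) < n then (1:ℤ) else 0)
      = if i ≤ (p:ℕ) then 1 else 0 := by
    intro p
    have := (σ p).2
    split_ifs <;> omega
  rw [Finset.sum_congr rfl (fun p _ => this p), count_ge]
  have : min i n = i := by omega
  rw [this]

lemma S_lower {n : ℕ} (σ : Equiv.Perm (Fin n)) (i : ℕ) {j : ℕ} (h : j ≤ n) :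
    (j : ℤ) - (i : ℤ) ≤ S σ i j := by
  have key : ∀ p : Fin n, (if (σ p : ℕ) < j then (1:ℤ) else 0) - (if (p:ℕ) < i then 1 else 0)
      ≤ (if i ≤ (p:ℕ) ∧ (σ p : ℕ) < j then 1 else 0) := by
    intro p; split_ifs <;> omega
  have h1 : (∑ p : Fin n, ((if (σ p : ℕ) < j then (1:ℤ) else 0) - (if (p:ℕ) < i then 1 else 0)))
      ≤ S σ i j := Finset.sum_le_sum (fun p _ => key p)
  rw [Finset.sum_sub_distrib, Equiv.sum_comp σ (fun q => if (q : ℕ) < j then (1:ℤ) else 0),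
    count_lt, count_lt] at h1
  have hm : min j n = j := by omega
  rw [hm] at h1
  have : ((min i n : ℕ) : ℤ) ≤ (i : ℤ) := by
    have : min i n ≤ i := min_le_left _ _
    exact_mod_cast this
  omega

lemma distSum_eq_S {n : ℕ} (σ : Equiv.Perm (Fin n)) (i j : Fin (n+1)) :
    distSum (PermMat σ) i j = S σ (i : ℕ) (j : ℕ) := by
  unfold distSum PermMat S
  apply Finset.sum_congr rfl
  intro p _
  have : ∀ q : Fin n, (if (i : ℕ) ≤ (p : ℕ) ∧ (q : ℕ) < (j : ℕ) then (if σ p = q then (1:ℤ) else 0) else 0)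
      = if σ p = q then (if (i : ℕ) ≤ (p : ℕ) ∧ (q : ℕ) < (j : ℕ) then (1:ℤ) else 0) else 0 := by
    intro q; split_ifs <;> rfl
  rw [Finset.sum_congr rfl (fun q _ => this q),
    Finset.sum_ite_eq Finset.univ (σ p) (fun q => if (i : ℕ) ≤ (p : ℕ) ∧ (q : ℕ) < (j : ℕ) then (1:ℤ) else 0)]
  simp

def cMat {n : ℕ} (σA σB : Equiv.Perm (Fin n)) (i k : ℕ) : ℤ :=
  Finset.univ.inf' Finset.univ_nonempty (fun j : Fin (n+1) => S σA i (j : ℕ) + S σB (j : ℕ) k)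

lemma cMat_le {n : ℕ} (σA σB : Equiv.Perm (Fin n)) (i k : ℕ) (j : Fin (n+1)) :
    cMat σA σB i k ≤ S σA i (j : ℕ) + S σB (j : ℕ) k :=
  Finset.inf'_le _ (Finset.mem_univ j)

lemma le_cMat {n : ℕ} (σA σB : Equiv.Perm (Fin n)) (i k : ℕ) (x : ℤ)
    (h : ∀ j : Fin (n+1), x ≤ S σA i (j : ℕ) + S σB (j : ℕ) k) :
    x ≤ cMat σA σB i k :=
  Finset.le_inf' _ _ (fun j _ => h j)

lemma cMat_exists {n : ℕ} (σA σB : Equiv.Perm (Fin n)) (i k : ℕ) :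
    ∃ j : Fin (n+1), cMat σA σB i k = S σA i (j : ℕ) + S σB (j : ℕ) k := by
  obtain ⟨j, -, hj⟩ := Finset.exists_mem_eq_inf' (Finset.univ_nonempty)
    (fun j : Fin (n+1) => S σA i (j : ℕ) + S σB (j : ℕ) k)
  exact ⟨j, hj⟩

section cProps
variable {n : ℕ} (σA σB : Equiv.Perm (Fin n))

lemma cMat_i0 (i : ℕ) : cMat σA σB i 0 = 0 := by
  apply le_antisymm
  · have := cMat_le σA σB i 0 0
    simp only [Fin.val_zero] at this
    rw [S_i0, S_i0] at this
    omega
  · apply le_cMat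
    intro j
    have := S_nonneg σA i (j : ℕ)
    have := S_nonneg σB (j : ℕ) 0
    omega

lemma cMat_nk (k : ℕ) : cMat σA σB n k = 0 := by
  apply le_antisymm
  · have := cMat_le σA σB n k (Fin.last n)
    simp only [Fin.val_last] at this
    rw [S_top σA le_rfl, S_top σB le_rfl] at this
    omega
  · apply le_cMat
    intro j
    have := S_nonneg σA n (j : ℕ)
    have := S_nonneg σB (j : ℕ) k
    omega

lemma cMat_0k {k : ℕ} (hk : k ≤ n) : cMat σA σB 0 k = (k : ℤ) := by
  apply le_antisymm
  · have := cMat_le σA σB 0 k 0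
    simp only [Fin.val_zero] at this
    rw [S_i0, S_0j σB hk] at this
    omega
  · apply le_cMat
    intro j
    have h1 := S_0j σA (j.is_le)
    have h2 := S_lower σB (j : ℕ) hk
    omega

lemma cMat_in {i : ℕ} (hi : i ≤ n) : cMat σA σB i n = (n : ℤ) - (i : ℤ) := by
  apply le_antisymm
  · have := cMat_le σA σB i n (Fin.last n)
    simp only [Fin.val_last] at this
    rw [S_in σA hi, S_top σB le_rfl] at this
    omega
  · apply le_cMat
    intro j
    have h1 := S_lower σA i (j.is_le)
    have h2 := S_in σB (j.is_le)
    omega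

lemma cMat_anti_i {i i' : ℕ} (h : i ≤ i') (k : ℕ) :
    cMat σA σB i' k ≤ cMat σA σB i k := by
  obtain ⟨j, hj⟩ := cMat_exists σA σB i k
  rw [hj]
  have := cMat_le σA σB i' k j
  have := S_anti_i σA h (j : ℕ)
  omega

lemma cMat_step_i (i k : ℕ) : cMat σA σB i k ≤ cMat σA σB (i+1) k + 1 := by
  obtain ⟨j, hj⟩ := cMat_exists σA σB (i+1) k
  rw [hj]
  have := cMat_le σA σB i k j
  have := S_step_i σA i (j : ℕ)
  omega

lemma cMat_monge {i i' k k' : ℕ} (hi : i ≤ i') (hk : k ≤ k') :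
    cMat σA σB i k + cMat σA σB i' k' ≤ cMat σA σB i k' + cMat σA σB i' k := by
  obtain ⟨j1, hj1⟩ := cMat_exists σA σB i k'
  obtain ⟨j2, hj2⟩ := cMat_exists σA σB i' k
  rcases le_total (j1 : ℕ) (j2 : ℕ) with hj | hj
  · have h1 := cMat_le σA σB i k j1
    have h2 := cMat_le σA σB i' k' j2
    have h3 := S_monge σB hj hk
    omega
  · have h1 := cMat_le σA σB i k j2
    have h2 := cMat_le σA σB i' k' j1
    have h3 := S_monge σA hi hj
    omega

end cProps

/-- mixed second difference of the min-plus product -/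
def dMat {n : ℕ} (σA σB : Equiv.Perm (Fin n)) (p q : ℕ) : ℤ :=
  cMat σA σB p (q+1) - cMat σA σB p q - cMat σA σB (p+1) (q+1) + cMat σA σB (p+1) q

section dProps
variable {n : ℕ} (σA σB : Equiv.Perm (Fin n))

lemma dMat_nonneg (p q : ℕ) : 0 ≤ dMat σA σB p q := by
  have := cMat_monge σA σB (by omega : p ≤ p+1) (by omega : q ≤ q+1)
  unfold dMat; omega

lemma dMat_le_one (p q : ℕ) : dMat σA σB p q ≤ 1 := by
  have h1 := cMat_step_i σA σB p (q+1)
  have h2 := cMat_anti_i σA σB (by omega : p ≤ p+1) q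
  unfold dMat; omega

lemma dMat_row_tele (p k : ℕ) :
    (∑ q ∈ Finset.range k, dMat σA σB p q)
      = cMat σA σB p k - cMat σA σB (p+1) k
        - (cMat σA σB p 0 - cMat σA σB (p+1) 0) := by
  have := Finset.sum_range_sub (fun q => cMat σA σB p q - cMat σA σB (p+1) q) k
  rw [← this]
  apply Finset.sum_congr rfl
  intro q _
  unfold dMat; ring

lemma dMat_row_sum {p : ℕ} (hp : p < n) :
    (∑ q ∈ Finset.range n, dMat σA σB p q) = 1 := by
  rw [dMat_row_tele, cMat_i0, cMat_i0, cMat_in σA σB (le_of_lt hp),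
    cMat_in σA σB (by omega : p + 1 ≤ n)]
  push_cast; ring

lemma dMat_col_sum {q : ℕ} (hq : q < n) :
    (∑ p ∈ Finset.range n, dMat σA σB p q) = 1 := by
  have := Finset.sum_range_sub' (fun p => cMat σA σB p (q+1) - cMat σA σB p q) n
  have heq : (∑ p ∈ Finset.range n, dMat σA σB p q)
      = ∑ p ∈ Finset.range n, ((fun p => cMat σA σB p (q+1) - cMat σA σB p q) p
          - (fun p => cMat σA σB p (q+1) - cMat σA σB p q) (p+1)) := by
    apply Finset.sum_congr rfl
    intro p _
    unfold dMat; ring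
  rw [heq, this, cMat_0k σA σB (by omega : q + 1 ≤ n), cMat_0k σA σB (le_of_lt hq),
    cMat_nk, cMat_nk]
  push_cast; ring

end dProps

/-- simple unit-Monge matrices are closed under distance
multiplication: if `P_A`, `P_B` are permutation matrices and
`C = P_A^Σ ⊙ P_B^Σ`, then `C = P_C^Σ` for some permutation matrix `P_C`. -/
theorem unitMonge_closed_distProd {n : ℕ} (σA σB : Equiv.Perm (Fin n)) :
    ∃ σC : Equiv.Perm (Fin n), ∀ i k : Fin (n+1),
      distProd (distSum (PermMat σA)) (distSum (PermMat σB)) i k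
        = distSum (PermMat σC) i k := by
  -- existence of the 1 in each row
  have hd01 : ∀ p q : ℕ, dMat σA σB p q = 0 ∨ dMat σA σB p q = 1 := by
    intro p q
    have := dMat_nonneg σA σB p q
    have := dMat_le_one σA σB p q
    omega
  have hex : ∀ p : Fin n, ∃ q : Fin n, dMat σA σB (p : ℕ) (q : ℕ) = 1 := by
    intro p
    have hrow := dMat_row_sum σA σB p.2
    by_contra hc
    push_neg at hc
    have : (∑ q ∈ Finset.range n, dMat σA σB (p : ℕ) q) = 0 := by
      apply Finset.sum_eq_zero
      intro q hq
      rw [Finset.mem_range] at hq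
      rcases hd01 (p : ℕ) q with h | h
      · exact h
      · exact absurd h (hc ⟨q, hq⟩)
    omega
  choose F hF using hex
  -- injectivity
  have hinj : Function.Injective F := by
    intro p p' hpp
    by_contra hne
    have hcol := dMat_col_sum σA σB (F p).2
    have hsub : ({(p : ℕ), (p' : ℕ)} : Finset ℕ) ⊆ Finset.range n := by
      intro x hx
      simp only [Finset.mem_insert, Finset.mem_singleton] at hx
      rcases hx with rfl | rfl
      · exact Finset.mem_range.mpr p.2
      · exact Finset.mem_range.mpr p'.2
    have hpair : (∑ x ∈ ({(p : ℕ), (p' : ℕ)} : Finset ℕ), dMat σA σB x (F p : ℕ)) = 2 := by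
      rw [Finset.sum_pair (by simpa [Fin.ext_iff] using hne : (p : ℕ) ≠ (p' : ℕ))]
      have h1 := hF p
      have h2 := hF p'
      rw [← hpp] at h2
      omega
    have := Finset.sum_le_sum_of_subset_of_nonneg hsub
      (fun x _ _ => dMat_nonneg σA σB x (F p : ℕ))
    rw [hpair, hcol] at this
    omega
  let σC : Equiv.Perm (Fin n) := Equiv.ofBijective F (Finite.injective_iff_bijective.mp hinj)
  have hσC : ∀ p : Fin n, σC p = F p := fun p => rfl
  -- rows of d are indicator rows
  have hrowchar : ∀ p : Fin n, ∀ q ∈ Finset.range n,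
      dMat σA σB (p : ℕ) q = if q = (σC p : ℕ) then 1 else 0 := by
    intro p q hq
    rw [hσC]
    rcases eq_or_ne q (F p : ℕ) with rfl | hne
    · rw [if_pos rfl]; exact hF p
    · rw [if_neg hne]
      rcases hd01 (p : ℕ) q with h | h
      · exact h
      · exfalso
        have hrow := dMat_row_sum σA σB p.2
        have hsub : ({q, (F p : ℕ)} : Finset ℕ) ⊆ Finset.range n := by
          intro x hx
          simp only [Finset.mem_insert, Finset.mem_singleton] at hx
          rcases hx with rfl | rfl
          · exact hq
          · exact Finset.mem_range.mpr (F p).2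
        have hpair : (∑ x ∈ ({q, (F p : ℕ)} : Finset ℕ), dMat σA σB (p : ℕ) x) = 2 := by
          rw [Finset.sum_pair hne]
          have := hF p
          omega
        have := Finset.sum_le_sum_of_subset_of_nonneg hsub
          (fun x _ _ => dMat_nonneg σA σB (p : ℕ) x)
        rw [hpair, hrow] at this
        omega
  refine ⟨σC, fun i k => ?_⟩
  -- reduce to ℕ-level statement
  have hLHS : distProd (distSum (PermMat σA)) (distSum (PermMat σB)) i k
      = cMat σA σB (i : ℕ) (k : ℕ) := by
    unfold distProd cMat
    apply Finset.inf'_congr _ rfl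
    intro j _
    rw [distSum_eq_S, distSum_eq_S]
  rw [hLHS, distSum_eq_S]
  -- per-row identity
  have hik : (i : ℕ) ≤ n := i.is_le
  have hkk : (k : ℕ) ≤ n := k.is_le
  have hterm : ∀ p : Fin n,
      (if (i : ℕ) ≤ (p : ℕ) ∧ (σC p : ℕ) < (k : ℕ) then (1:ℤ) else 0)
        = (if (i : ℕ) ≤ (p : ℕ) then
            cMat σA σB (p : ℕ) (k : ℕ) - cMat σA σB ((p : ℕ)+1) (k : ℕ) else 0) := by
    intro p
    rcases le_or_gt (i : ℕ) (p : ℕ) with hip | hip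
    · have htele := dMat_row_tele σA σB (p : ℕ) (k : ℕ)
      rw [cMat_i0, cMat_i0] at htele
      have hsum : (∑ q ∈ Finset.range (k : ℕ), dMat σA σB (p : ℕ) q)
          = ∑ q ∈ Finset.range (k : ℕ), (if q = (σC p : ℕ) then (1:ℤ) else 0) := by
        apply Finset.sum_congr rfl
        intro q hq
        rw [Finset.mem_range] at hq
        exact hrowchar p q (Finset.mem_range.mpr (by omega))
      rw [hsum] at htele
      rw [Finset.sum_ite_eq' (Finset.range (k : ℕ)) ((σC p : ℕ)) (fun _ => (1:ℤ))] at htele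
      simp only [Finset.mem_range] at htele
      simp only [and_iff_right hip]
      rw [if_pos hip, htele]; ring
    · rw [if_neg (by omega), if_neg (by omega)]
  unfold S
  rw [Finset.sum_congr rfl (fun p _ => hterm p)]
  -- telescope over p
  have hsr : (∑ p : Fin n, (if (i : ℕ) ≤ (p : ℕ) then
        cMat σA σB (p : ℕ) (k : ℕ) - cMat σA σB ((p : ℕ)+1) (k : ℕ) else 0))
      = ∑ p ∈ Finset.range n, (if (i : ℕ) ≤ p then
        cMat σA σB p (k : ℕ) - cMat σA σB (p+1) (k : ℕ) else 0) :=
    Fin.sum_univ_eq_sum_range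
      (fun m => if (i : ℕ) ≤ m then
        cMat σA σB m (k : ℕ) - cMat σA σB (m+1) (k : ℕ) else 0) n
  rw [hsr]
  have hG : ∀ p ∈ Finset.range n, (if (i : ℕ) ≤ p then
        cMat σA σB p (k : ℕ) - cMat σA σB (p+1) (k : ℕ) else 0)
      = (fun m => cMat σA σB (max m (i : ℕ)) (k : ℕ)) p
        - (fun m => cMat σA σB (max m (i : ℕ)) (k : ℕ)) (p+1) := by
    intro p _
    dsimp only
    rcases le_or_gt (i : ℕ) p with hip | hip
    · rw [if_pos hip, Nat.max_eq_left hip, Nat.max_eq_left (by omega)]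
    · rw [if_neg (by omega), Nat.max_eq_right (by omega), Nat.max_eq_right (by omega)]
      ring
  rw [Finset.sum_congr rfl hG, Finset.sum_range_sub' (fun m => cMat σA σB (max m (i : ℕ)) (k : ℕ)) n]
  rw [Nat.max_eq_right (Nat.zero_le _), Nat.max_eq_left hik, cMat_nk]
  ring
end

section
/- In the seaweed monoid T_n (presented on generators id, g_1,...,g_{n−1} with relations g_t² = g_t; g_t g_u = g_u g_t for |t−u| ≥ 2; g_t g_u g_t = g_u g_t g_u for |t−u| = 1), the braid relation g_t g_{t+1} g_t = g_{t+1} g_t g_{t+1} holds for the corresponding simple unit-Monge matrices: P_t^Σ ⊙ P_{t+1}^Σ ⊙ P_t^Σ = P_{t+1}^Σ ⊙ P_t^Σ ⊙ P_{t+1}^Σ, where P_t is the elementary transposition permutation matrix. -/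
set_option linter.unusedVariables false
set_option linter.unusedSectionVars false


lemma distSum_perm {n : ℕ} (σ : Equiv.Perm (Fin n)) (i : Fin (n+1)) (j : Fin (n+1)) :
    distSum (PermMat σ) i j
      = ∑ p : Fin n, if (i : ℕ) ≤ (p : ℕ) ∧ ((σ p : ℕ)) < (j : ℕ) then 1 else 0 := by
  unfold distSum
  refine Finset.sum_congr rfl fun p _ => ?_
  rw [Finset.sum_eq_single (σ p)]
  · simp [PermMat]
  · intro q _ hq
    simp [PermMat, Ne.symm hq]
  · simp

lemma distSum_swap {n : ℕ} (a b : ℕ) (ha : a < n) (hb : b < n) (hab : b = a + 1)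
    (i j : Fin (n+1)) :
    distSum (PermMat (Equiv.swap (⟨a, ha⟩ : Fin n) ⟨b, hb⟩)) i j
      = max ((j:ℤ) - i) 0 + (if (i:ℕ) = b ∧ (j:ℕ) = b then 1 else 0) := by
  rw [distSum_perm]
  have hne : (⟨a, ha⟩ : Fin n) ≠ ⟨b, hb⟩ := by simp [Fin.ext_iff]; omega
  set σ := Equiv.swap (⟨a, ha⟩ : Fin n) ⟨b, hb⟩ with hσ
  have key : (∑ p : Fin n, if (i : ℕ) ≤ (p : ℕ) ∧ ((σ p : ℕ)) < (j : ℕ) then (1:ℤ) else 0)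
      - (∑ p : Fin n, if (i : ℕ) ≤ (p : ℕ) ∧ ((p : ℕ)) < (j : ℕ) then (1:ℤ) else 0)
      = (if (i:ℕ) = b ∧ (j:ℕ) = b then 1 else 0) := by
    rw [← Finset.sum_sub_distrib]
    rw [← Finset.sum_subset (Finset.subset_univ ({(⟨a, ha⟩ : Fin n), ⟨b, hb⟩} : Finset (Fin n)))]
    · rw [Finset.sum_pair hne]
      have h1 : σ ⟨a, ha⟩ = ⟨b, hb⟩ := Equiv.swap_apply_left _ _
      have h2 : σ ⟨b, hb⟩ = ⟨a, ha⟩ := Equiv.swap_apply_right _ _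
      rw [h1, h2]
      simp only [Fin.val_mk]
      split_ifs <;> omega
    · intro p _ hp
      have hpa : p ≠ ⟨a, ha⟩ := by simp_all
      have hpb : p ≠ ⟨b, hb⟩ := by simp_all
      rw [Equiv.swap_apply_of_ne_of_ne hpa hpb]
      ring
  have base : (∑ p : Fin n, if (i : ℕ) ≤ (p : ℕ) ∧ ((p : ℕ)) < (j : ℕ) then (1:ℤ) else 0)
      = max ((j:ℤ) - i) 0 := by
    rw [Fin.sum_univ_eq_sum_range (fun p => if (i : ℕ) ≤ p ∧ p < (j : ℕ) then (1:ℤ) else 0)]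
    rw [Finset.sum_boole]
    have : (Finset.range n).filter (fun p => (i : ℕ) ≤ p ∧ p < (j : ℕ)) = Finset.Ico (i:ℕ) (j:ℕ) := by
      ext p
      simp [Finset.mem_Ico]
      omega
    rw [this, Nat.card_Ico]
    omega
  omega

set_option maxHeartbeats 1000000 in
lemma triple_eq₁ {n : ℕ} (t : ℕ) (ht1 : 1 ≤ t) (ht2 : t + 2 ≤ n)
    (A B : Fin (n+1) → Fin (n+1) → ℤ)
    (hA : ∀ i j : Fin (n+1), A i j = max ((j:ℤ) - i) 0 + (if (i:ℕ) = t ∧ (j:ℕ) = t then 1 else 0))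
    (hB : ∀ i j : Fin (n+1), B i j = max ((j:ℤ) - i) 0 + (if (i:ℕ) = t + 1 ∧ (j:ℕ) = t + 1 then 1 else 0))
    (i k : Fin (n+1)) :
    distProd (distProd A B) A i k
      = max ((k:ℤ) - i) 0
        + (if ((i:ℕ) = t ∨ (i:ℕ) = t+1) ∧ ((k:ℕ) = t ∨ (k:ℕ) = t+1) then 1 else 0) := by
  unfold distProd
  set F : ℤ := max ((k:ℤ) - i) 0
        + (if ((i:ℕ) = t ∨ (i:ℕ) = t+1) ∧ ((k:ℕ) = t ∨ (k:ℕ) = t+1) then 1 else 0) with hF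
  have ub_at : ∀ W : Fin (n+1),
      (Finset.univ.inf' Finset.univ_nonempty fun j2 =>
        (Finset.univ.inf' Finset.univ_nonempty fun j1 => A i j1 + B j1 j2) + A j2 k)
      ≤ (A i W + B W W) + A W k := by
    intro W
    calc _ ≤ (Finset.univ.inf' Finset.univ_nonempty fun j1 => A i j1 + B j1 W) + A W k :=
          Finset.inf'_le _ (Finset.mem_univ W)
      _ ≤ (A i W + B W W) + A W k := by
          have : (Finset.univ.inf' Finset.univ_nonempty fun j1 => A i j1 + B j1 W)
              ≤ A i W + B W W := Finset.inf'_le _ (Finset.mem_univ W)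
          linarith
  apply le_antisymm
  · -- upper bound via witnesses
    have key : ∀ W : Fin (n+1), (A i W + B W W) + A W k ≤ F →
        (Finset.univ.inf' Finset.univ_nonempty fun j2 =>
          (Finset.univ.inf' Finset.univ_nonempty fun j1 => A i j1 + B j1 j2) + A j2 k) ≤ F :=
      fun W h => le_trans (ub_at W) h
    by_cases h1 : (i:ℕ) = t ∨ (i:ℕ) = t+1
    · by_cases h2 : (k:ℕ) = t ∨ (k:ℕ) = t+1
      · rcases h1 with h1 | h1 <;> rcases h2 with h2 | h2
        · exact key ⟨t-1, by omega⟩ (by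
            rw [hA, hB, hA, hF]; simp only [Fin.val_mk, h1, h2, true_and, and_true, true_or, or_true, if_true]; split_ifs <;> omega)
        · exact key ⟨t-1, by omega⟩ (by
            rw [hA, hB, hA, hF]; simp only [Fin.val_mk, h1, h2, true_and, and_true, true_or, or_true, if_true]; split_ifs <;> omega)
        · exact key ⟨t+1, by omega⟩ (by
            rw [hA, hB, hA, hF]; simp only [Fin.val_mk, h1, h2, true_and, and_true, true_or, or_true, if_true]; split_ifs <;> omega)
        · exact key ⟨t+1, by omega⟩ (by
            rw [hA, hB, hA, hF]; simp only [Fin.val_mk, h1, h2, true_and, and_true, true_or, or_true, if_true]; split_ifs <;> omega)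
      · exact key ⟨(k:ℕ), k.isLt⟩ (by
          rw [hA, hB, hA, hF]; simp only [Fin.val_mk, true_and, and_true, true_or, or_true, if_true]; split_ifs <;> omega)
    · exact key ⟨(i:ℕ), i.isLt⟩ (by
        rw [hA, hB, hA, hF]; simp only [Fin.val_mk, true_and, and_true, true_or, or_true, if_true]; split_ifs <;> omega)
  · -- lower bound
    refine Finset.le_inf' _ _ fun j2 _ => ?_
    have h : F - A j2 k ≤ (Finset.univ.inf' Finset.univ_nonempty fun j1 => A i j1 + B j1 j2) :=
      Finset.le_inf' _ _ fun j1 _ => by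
        rw [hA, hB, hA, hF]
        by_cases hik : ((i:ℕ) = t ∨ (i:ℕ) = t+1) ∧ ((k:ℕ) = t ∨ (k:ℕ) = t+1)
        · obtain ⟨hi | hi, hk | hk⟩ := hik <;>
            simp only [hi, hk, true_and, and_true, true_or, or_true, if_true] <;>
            split_ifs <;> omega
        · rw [if_neg hik]
          clear hik
          split_ifs <;> omega
    linarith

set_option maxHeartbeats 1000000 in
lemma triple_eq₂ {n : ℕ} (t : ℕ) (ht1 : 1 ≤ t) (ht2 : t + 2 ≤ n)
    (A B : Fin (n+1) → Fin (n+1) → ℤ)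
    (hA : ∀ i j : Fin (n+1), A i j = max ((j:ℤ) - i) 0 + (if (i:ℕ) = t + 1 ∧ (j:ℕ) = t + 1 then 1 else 0))
    (hB : ∀ i j : Fin (n+1), B i j = max ((j:ℤ) - i) 0 + (if (i:ℕ) = t ∧ (j:ℕ) = t then 1 else 0))
    (i k : Fin (n+1)) :
    distProd (distProd A B) A i k
      = max ((k:ℤ) - i) 0
        + (if ((i:ℕ) = t ∨ (i:ℕ) = t+1) ∧ ((k:ℕ) = t ∨ (k:ℕ) = t+1) then 1 else 0) := by
  unfold distProd
  set F : ℤ := max ((k:ℤ) - i) 0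
        + (if ((i:ℕ) = t ∨ (i:ℕ) = t+1) ∧ ((k:ℕ) = t ∨ (k:ℕ) = t+1) then 1 else 0) with hF
  have ub_at : ∀ W : Fin (n+1),
      (Finset.univ.inf' Finset.univ_nonempty fun j2 =>
        (Finset.univ.inf' Finset.univ_nonempty fun j1 => A i j1 + B j1 j2) + A j2 k)
      ≤ (A i W + B W W) + A W k := by
    intro W
    calc _ ≤ (Finset.univ.inf' Finset.univ_nonempty fun j1 => A i j1 + B j1 W) + A W k :=
          Finset.inf'_le _ (Finset.mem_univ W)
      _ ≤ (A i W + B W W) + A W k := by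
          have : (Finset.univ.inf' Finset.univ_nonempty fun j1 => A i j1 + B j1 W)
              ≤ A i W + B W W := Finset.inf'_le _ (Finset.mem_univ W)
          linarith
  apply le_antisymm
  · -- upper bound via witnesses
    have key : ∀ W : Fin (n+1), (A i W + B W W) + A W k ≤ F →
        (Finset.univ.inf' Finset.univ_nonempty fun j2 =>
          (Finset.univ.inf' Finset.univ_nonempty fun j1 => A i j1 + B j1 j2) + A j2 k) ≤ F :=
      fun W h => le_trans (ub_at W) h
    by_cases h1 : (i:ℕ) = t ∨ (i:ℕ) = t+1
    · by_cases h2 : (k:ℕ) = t ∨ (k:ℕ) = t+1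
      · by_cases h3 : (i:ℕ) = t
        · rcases h2 with h2 | h2
          · exact key ⟨t+1, by omega⟩ (by
              rw [hA, hB, hA, hF]; simp only [Fin.val_mk, h3, h2, true_and, and_true, true_or, or_true, if_true]; split_ifs <;> omega)
          · exact key ⟨t+1, by omega⟩ (by
              rw [hA, hB, hA, hF]; simp only [Fin.val_mk, h3, h2, true_and, and_true, true_or, or_true, if_true]; split_ifs <;> omega)
        · have h5 : (i:ℕ) = t+1 := h1.resolve_left h3
          by_cases h4 : (k:ℕ) = t
          · exact key ⟨t, by omega⟩ (by
              rw [hA, hB, hA, hF]; simp only [Fin.val_mk, h5, h4, true_and, and_true, true_or, or_true, if_true]; split_ifs <;> omega)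
          · have h6 : (k:ℕ) = t+1 := h2.resolve_left h4
            exact key ⟨t+2, by omega⟩ (by
              rw [hA, hB, hA, hF]; simp only [Fin.val_mk, h5, h6, true_and, and_true, true_or, or_true, if_true]; split_ifs <;> omega)
      · exact key ⟨(k:ℕ), k.isLt⟩ (by
          rw [hA, hB, hA, hF]; simp only [Fin.val_mk, true_and, and_true, true_or, or_true, if_true]; split_ifs <;> omega)
    · exact key ⟨(i:ℕ), i.isLt⟩ (by
        rw [hA, hB, hA, hF]; simp only [Fin.val_mk, true_and, and_true, true_or, or_true, if_true]; split_ifs <;> omega)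
  · -- lower bound
    refine Finset.le_inf' _ _ fun j2 _ => ?_
    have h : F - A j2 k ≤ (Finset.univ.inf' Finset.univ_nonempty fun j1 => A i j1 + B j1 j2) :=
      Finset.le_inf' _ _ fun j1 _ => by
        rw [hA, hB, hA, hF]
        by_cases hik : ((i:ℕ) = t ∨ (i:ℕ) = t+1) ∧ ((k:ℕ) = t ∨ (k:ℕ) = t+1)
        · obtain ⟨hi | hi, hk | hk⟩ := hik <;>
            simp only [hi, hk, true_and, and_true, true_or, or_true, if_true] <;>
            split_ifs <;> omega
        · rw [if_neg hik]
          clear hik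
          split_ifs <;> omega
    linarith

/-- the braid relation `g_t g_{t+1} g_t = g_{t+1} g_t g_{t+1}`
holds for simple unit-Monge matrices of elementary transpositions: the
elementary transposition matrix `P_t` (swapping half-integer positions
`t−1/2`, `t+1/2`, i.e. indices `t−1`, `t`) satisfies
`P_t^Σ ⊙ P_{t+1}^Σ ⊙ P_t^Σ = P_{t+1}^Σ ⊙ P_t^Σ ⊙ P_{t+1}^Σ`. -/
theorem seaweed_braid_relation {n : ℕ} (t : ℕ) (h1 : 1 ≤ t) (h2 : t + 1 ≤ n - 1)
    (Pt Pt1 : Fin n → Fin n → ℤ)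
    (hPt : Pt = PermMat (Equiv.swap (⟨t - 1, by omega⟩ : Fin n) ⟨t, by omega⟩))
    (hPt1 : Pt1 = PermMat (Equiv.swap (⟨t, by omega⟩ : Fin n) ⟨t + 1, by omega⟩)) :
    ∀ i k : Fin (n+1),
      distProd (distProd (distSum Pt) (distSum Pt1)) (distSum Pt) i k
        = distProd (distProd (distSum Pt1) (distSum Pt)) (distSum Pt1) i k := by
  intro i k
  have hA : ∀ i j : Fin (n+1), distSum Pt i j
      = max ((j:ℤ) - i) 0 + (if (i:ℕ) = t ∧ (j:ℕ) = t then 1 else 0) := by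
    intro i j
    rw [hPt]
    have h := distSum_swap (n := n) (t-1) t (by omega) (by omega) (by omega) i j
    convert h using 3 <;> omega
  have hB : ∀ i j : Fin (n+1), distSum Pt1 i j
      = max ((j:ℤ) - i) 0 + (if (i:ℕ) = t + 1 ∧ (j:ℕ) = t + 1 then 1 else 0) := by
    intro i j
    rw [hPt1]
    exact distSum_swap (n := n) t (t+1) (by omega) (by omega) rfl i j
  rw [triple_eq₁ t h1 (by omega) (distSum Pt) (distSum Pt1) hA hB i k,
      triple_eq₂ t h1 (by omega) (distSum Pt1) (distSum Pt) hB hA i k]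
end

section
/- Distance-product criterion for Bruhat comparability: permutation matrix P_A is below P_B in the Bruhat order if and only if P_A^R ⊡ P_B = Id^R, i.e. the distance product (P_A^R)^Σ ⊙ P_B^Σ equals (Id^R)^Σ. -/
/-- A single Bruhat step: a `2×2` submatrix of the form `[[1,0],[0,1]]`
(on rows `i < i'` and columns `j < j'`) is replaced by `[[0,1],[1,0]]`,
all other entries being unchanged. -/
def BruhatStep {n : ℕ} (P Q : Fin n → Fin n → ℤ) : Prop :=
  ∃ i i' j j' : Fin n, i < i' ∧ j < j' ∧
    P i j = 1 ∧ P i j' = 0 ∧ P i' j = 0 ∧ P i' j' = 1 ∧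
    Q i j = 0 ∧ Q i j' = 1 ∧ Q i' j = 1 ∧ Q i' j' = 0 ∧
    (∀ a b : Fin n, ¬ ((a = i ∨ a = i') ∧ (b = j ∨ b = j')) → Q a b = P a b)

/-- `P` is below `Q` in the Bruhat order: `P` can be transformed into `Q`
by a sequence of Bruhat steps. -/
def Bruhat {n : ℕ} (P Q : Fin n → Fin n → ℤ) : Prop :=
  Relation.ReflTransGen BruhatStep P Q

/-- Counterclockwise 90-degree rotation: `P^R(î,ĵ) = P(ĵ, n−î)`. -/
def rot {n : ℕ} (P : Fin n → Fin n → ℤ) : Fin n → Fin n → ℤ :=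
  fun i j => P j i.rev

/-- The reverse identity permutation matrix: `Id^R(î,ĵ) = 1` iff `î + ĵ = n`. -/
def IdR (n : ℕ) : Fin n → Fin n → ℤ :=
  fun i j => if (i : ℕ) + (j : ℕ) = n - 1 then 1 else 0


/-! ### Auxiliary development -/

def rk {n : ℕ} (σ : Equiv.Perm (Fin n)) (a b : ℕ) : ℕ :=
  ∑ q : Fin n, if (q : ℕ) < a ∧ (σ q : ℕ) < b then 1 else 0

def meas {n : ℕ} (σ τ : Equiv.Perm (Fin n)) : ℕ :=
  ∑ a ∈ Finset.range (n+1), ∑ b ∈ Finset.range (n+1), (rk σ a b - rk τ a b)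

lemma sum_range_ind_le (n t : ℕ) :
    (∑ x ∈ Finset.range n, if t ≤ x then (1:ℤ) else 0) = ((n - t : ℕ) : ℤ) := by
  induction n with
  | zero => simp
  | succ n ih =>
    rw [Finset.sum_range_succ, ih]
    by_cases h : t ≤ n <;> simp [h] <;> omega

lemma sum_range_ind_lt (n b : ℕ) :
    (∑ x ∈ Finset.range n, if x < b then (1:ℤ) else 0) = ((min b n : ℕ) : ℤ) := by
  induction n with
  | zero => simp
  | succ n ih =>
    rw [Finset.sum_range_succ, ih]
    by_cases h : n < b <;> simp [h] <;> omega

lemma sum_fin_ind_le {n : ℕ} (t : ℕ) :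
    (∑ p : Fin n, if t ≤ (p : ℕ) then (1:ℤ) else 0) = ((n - t : ℕ) : ℤ) := by
  rw [Fin.sum_univ_eq_sum_range (fun x => if t ≤ x then (1:ℤ) else 0) n, sum_range_ind_le]

lemma sum_fin_ind_lt {n : ℕ} (b : ℕ) :
    (∑ p : Fin n, if (p : ℕ) < b then (1:ℤ) else 0) = ((min b n : ℕ) : ℤ) := by
  rw [Fin.sum_univ_eq_sum_range (fun x => if x < b then (1:ℤ) else 0) n, sum_range_ind_lt]

lemma sum_perm_ind_lt {n : ℕ} (σ : Equiv.Perm (Fin n)) (b : ℕ) :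
    (∑ q : Fin n, if (σ q : ℕ) < b then (1:ℤ) else 0) = ((min b n : ℕ) : ℤ) := by
  rw [Equiv.sum_comp σ (fun x => if (x : ℕ) < b then (1:ℤ) else 0), sum_fin_ind_lt]

lemma rk_cast {n : ℕ} (σ : Equiv.Perm (Fin n)) (a b : ℕ) :
    ((rk σ a b : ℕ) : ℤ) = ∑ q : Fin n, if (q : ℕ) < a ∧ (σ q : ℕ) < b then (1:ℤ) else 0 := by
  simp [rk, apply_ite (fun m : ℕ => (m : ℤ))]


lemma rk_zero_left {n : ℕ} (σ : Equiv.Perm (Fin n)) (b : ℕ) : rk σ 0 b = 0 := by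
  simp [rk]

lemma rk_zero_right {n : ℕ} (σ : Equiv.Perm (Fin n)) (a : ℕ) : rk σ a 0 = 0 := by
  simp [rk]

lemma rk_full {n : ℕ} (σ : Equiv.Perm (Fin n)) (b : ℕ) : (rk σ n b : ℤ) = ((min b n : ℕ) : ℤ) := by
  rw [rk_cast, ← sum_perm_ind_lt σ b]
  refine Finset.sum_congr rfl (fun q _ => ?_)
  have := q.isLt
  split_ifs <;> omega

lemma rk_mono_right {n : ℕ} (σ : Equiv.Perm (Fin n)) (a : ℕ) {b b' : ℕ} (h : b ≤ b') :
    rk σ a b ≤ rk σ a b' := by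
  refine Finset.sum_le_sum (fun q _ => ?_)
  split_ifs <;> omega

lemma rk_window {n : ℕ} (σ : Equiv.Perm (Fin n)) (a : ℕ) {m k : ℕ} (h : m ≤ k) :
    (rk σ a k : ℤ) + min m n ≤ (rk σ a m : ℤ) + min k n := by
  have h1 : (rk σ a k : ℤ) + ((min m n : ℕ) : ℤ) ≤ (rk σ a m : ℤ) + ((min k n : ℕ) : ℤ) := by
    rw [rk_cast, rk_cast, ← sum_perm_ind_lt σ m, ← sum_perm_ind_lt σ k,
      ← Finset.sum_add_distrib, ← Finset.sum_add_distrib]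
    refine Finset.sum_le_sum (fun q _ => ?_)
    split_ifs <;> omega
  push_cast at h1 ⊢
  · exact h1

lemma rk_clip {n : ℕ} (σ : Equiv.Perm (Fin n)) (a b : ℕ) :
    rk σ a b = rk σ (min a n) (min b n) := by
  refine Finset.sum_congr rfl (fun q _ => ?_)
  have h1 := q.isLt
  have h2 := (σ q).isLt
  split_ifs <;> omega


lemma distSum_permMat {n : ℕ} (σ : Equiv.Perm (Fin n)) (j k : Fin (n+1)) :
    distSum (PermMat σ) j k = ((min (k : ℕ) n : ℕ) : ℤ) - rk σ (j : ℕ) (k : ℕ) := by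
  have h1 : distSum (PermMat σ) j k
      = ∑ p : Fin n, if (j : ℕ) ≤ (p : ℕ) ∧ (σ p : ℕ) < (k : ℕ) then (1:ℤ) else 0 := by
    unfold distSum PermMat
    refine Finset.sum_congr rfl (fun p _ => ?_)
    rw [Finset.sum_eq_single (σ p)]
    · split_ifs <;> simp_all
    · intro q _ hq
      by_cases h : (j : ℕ) ≤ (p : ℕ) ∧ (q : ℕ) < (k : ℕ) <;> simp [h, hq.symm]
    · simp
  rw [h1, eq_sub_iff_add_eq, rk_cast, ← Finset.sum_add_distrib, ← sum_perm_ind_lt σ (k : ℕ)]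
  refine Finset.sum_congr rfl (fun q _ => ?_)
  split_ifs <;> omega

lemma distSum_rot {n : ℕ} (σ : Equiv.Perm (Fin n)) (i j : Fin (n+1)) :
    distSum (rot (PermMat σ)) i j = (rk σ (j : ℕ) (n - (i : ℕ)) : ℤ) := by
  have h1 : distSum (rot (PermMat σ)) i j
      = ∑ q : Fin n, ∑ p : Fin n,
          if (i : ℕ) ≤ (p : ℕ) ∧ (q : ℕ) < (j : ℕ) then (if σ q = p.rev then 1 else 0) else 0 := by
    rw [distSum, Finset.sum_comm]
    rfl
  rw [h1, rk_cast]
  refine Finset.sum_congr rfl (fun q _ => ?_)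
  rw [Finset.sum_eq_single (σ q).rev]
  · have hrev : (σ q).rev.rev = σ q := Fin.rev_rev _
    have hv : ((σ q).rev : ℕ) = n - ((σ q : ℕ) + 1) := Fin.val_rev (σ q)
    have h2 : (σ q : ℕ) < n := (σ q).isLt
    by_cases h : (i : ℕ) ≤ ((σ q).rev : ℕ) ∧ (q : ℕ) < (j : ℕ)
    · simp only [h, if_true, hrev, if_pos rfl]
      have : (q:ℕ) < (j:ℕ) ∧ (σ q : ℕ) < n - (i:ℕ) := by
        constructor
        · exact h.2
        · have hi : (i : ℕ) ≤ n := by omega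
          omega
      simp [this]
    · simp only [h, if_false]
      have : ¬ ((q:ℕ) < (j:ℕ) ∧ (σ q : ℕ) < n - (i:ℕ)) := by
        intro hc
        exact h ⟨by omega, hc.1⟩
      simp [this]
  · intro p _ hp
    have : σ q ≠ p.rev := by
      intro hc
      exact hp (by rw [hc, Fin.rev_rev])
    simp [this]
  · simp

lemma distSum_IdR {n : ℕ} (i k : Fin (n+1)) :
    distSum (IdR n) i k = ((min (n - (i:ℕ)) (k:ℕ) : ℕ) : ℤ) := by
  have h1 : distSum (IdR n) i k
      = ∑ p : Fin n, if max (i:ℕ) (n - (k:ℕ)) ≤ (p:ℕ) then (1:ℤ) else 0 := by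
    unfold distSum IdR
    refine Finset.sum_congr rfl (fun p _ => ?_)
    rw [Finset.sum_eq_single p.rev]
    · have hv : (p.rev : ℕ) = n - ((p:ℕ) + 1) := Fin.val_rev p
      have hp : (p : ℕ) < n := p.isLt
      have hk : (k : ℕ) ≤ n := by omega
      have hi : (i : ℕ) ≤ n := by omega
      by_cases h : (i:ℕ) ≤ (p:ℕ) ∧ ((p.rev : ℕ)) < (k:ℕ)
      · have hc : (p:ℕ) + ((p.rev:ℕ)) = n - 1 := by omega
        split_ifs <;> omega
      · split_ifs <;> omega
    · intro q _ hq
      have hv : (p.rev : ℕ) = n - ((p:ℕ) + 1) := Fin.val_rev p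
      have hp : (p : ℕ) < n := p.isLt
      have hneq : ¬ ((p:ℕ) + (q:ℕ) = n - 1) := by
        intro hc
        apply hq
        apply Fin.ext
        omega
      split_ifs <;> simp [IdR, hneq]
    · simp
  rw [h1, sum_fin_ind_le]
  congr 1
  have hk : (k : ℕ) ≤ n := by omega
  have hi : (i : ℕ) ≤ n := by omega
  omega


theorem distProd_iff_dom {n : ℕ} (σA σB : Equiv.Perm (Fin n)) :
    (∀ i k : Fin (n+1),
        distProd (distSum (rot (PermMat σA))) (distSum (PermMat σB)) i k
          = distSum (IdR n) i k)
      ↔ (∀ a b : ℕ, rk σB a b ≤ rk σA a b) := by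
  constructor
  · intro hEq a b
    rw [rk_clip σA a b, rk_clip σB a b]
    set a' := min a n with ha'
    set b' := min b n with hb'
    have ha'n : a' ≤ n := min_le_right _ _
    have hb'n : b' ≤ n := min_le_right _ _
    set i : Fin (n+1) := ⟨n - b', by omega⟩
    set k : Fin (n+1) := ⟨b', by omega⟩
    set j0 : Fin (n+1) := ⟨a', by omega⟩
    have h := hEq i k
    rw [distSum_IdR] at h
    have hik : (i : ℕ) = n - b' := rfl
    have hkk : (k : ℕ) = b' := rfl
    have hmin : min (n - (i:ℕ)) (k:ℕ) = b' := by
      rw [hik, hkk]; omega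
    have hle : distSum (IdR n) i k
        ≤ distSum (rot (PermMat σA)) i j0 + distSum (PermMat σB) j0 k := by
      rw [← hEq i k, distProd]
      exact Finset.inf'_le _ (Finset.mem_univ j0)
    rw [distSum_IdR, distSum_rot, distSum_permMat, hmin] at hle
    have hni : n - (i:ℕ) = b' := by rw [hik]; omega
    rw [hni, hkk] at hle
    have hj0 : (j0 : ℕ) = a' := rfl
    rw [hj0] at hle
    have : min b' n = b' := by omega
    rw [this] at hle
    omega
  · intro hdom i k
    rw [distSum_IdR, distProd]
    have hkn : (k:ℕ) ≤ n := by omega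
    have hin : (i:ℕ) ≤ n := by omega
    set m := n - (i:ℕ) with hm
    apply le_antisymm
    · -- inf' ≤ min m k : take j = 0 or j = last
      rcases le_total m (k:ℕ) with hmk | hmk
      · have : min m (k:ℕ) = m := by omega
        rw [this]
        have hle := Finset.inf'_le (b := Fin.last n)
          (f := fun j => distSum (rot (PermMat σA)) i j + distSum (PermMat σB) j k)
          (Finset.mem_univ _)
        refine hle.trans (le_of_eq ?_)
        rw [distSum_rot, distSum_permMat]
        have hlast : ((Fin.last n : Fin (n+1)) : ℕ) = n := rfl
        rw [hlast, ← hm]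
        have hA := rk_full σA m
        have hB := rk_full σB (k:ℕ)
        have h1 : min m n = m := by omega
        have h2 : min (k:ℕ) n = (k:ℕ) := by omega
        rw [h1] at hA
        rw [h2] at hB
        rw [hA, hB, h2]
        ring
      · have : min m (k:ℕ) = (k:ℕ) := by omega
        rw [this]
        have hle := Finset.inf'_le (b := (0 : Fin (n+1)))
          (f := fun j => distSum (rot (PermMat σA)) i j + distSum (PermMat σB) j k)
          (Finset.mem_univ _)
        refine hle.trans (le_of_eq ?_)
        rw [distSum_rot, distSum_permMat]
        have h0 : ((0 : Fin (n+1)) : ℕ) = 0 := rfl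
        rw [h0, rk_zero_left, rk_zero_left]
        have h2 : min (k:ℕ) n = (k:ℕ) := by omega
        rw [h2]
        ring
    · apply Finset.le_inf'
      intro j _
      rw [distSum_rot, distSum_permMat, ← hm]
      have hdomj := hdom (j:ℕ) m
      rcases le_total (k:ℕ) m with hkm | hkm
      · have h1 : rk σB (j:ℕ) (k:ℕ) ≤ rk σB (j:ℕ) m := rk_mono_right σB _ hkm
        have h2 : min (k:ℕ) n = (k:ℕ) := by omega
        rw [h2]
        have : min m (k:ℕ) = (k:ℕ) := by omega
        rw [this]
        have := hdom (j:ℕ) m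
        omega
      · have h1 := rk_window σB (j:ℕ) hkm
        have h2 : min (k:ℕ) n = (k:ℕ) := by omega
        have h3 : min m n = m := by omega
        rw [h2] at h1 ⊢
        rw [h3] at h1
        have : min m (k:ℕ) = m := by omega
        rw [this]
        omega


lemma mul_swap_left {n : ℕ} (σ : Equiv.Perm (Fin n)) (i i' : Fin n) :
    (σ * Equiv.swap i i') i = σ i' := by simp [Equiv.Perm.mul_apply]
lemma mul_swap_right {n : ℕ} (σ : Equiv.Perm (Fin n)) (i i' : Fin n) :
    (σ * Equiv.swap i i') i' = σ i := by simp [Equiv.Perm.mul_apply]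
lemma mul_swap_other {n : ℕ} (σ : Equiv.Perm (Fin n)) {i i' q : Fin n}
    (h1 : q ≠ i) (h2 : q ≠ i') : (σ * Equiv.swap i i') q = σ q := by
  simp [Equiv.Perm.mul_apply, Equiv.swap_apply_of_ne_of_ne h1 h2]


lemma sum_split2 {n : ℕ} {i i' : Fin n} (hne : i ≠ i') (f : Fin n → ℕ) :
    ∑ q : Fin n, f q = f i + (f i' + ∑ q ∈ (Finset.univ.erase i).erase i', f q) := by
  have hmem : i' ∈ Finset.univ.erase i := Finset.mem_erase.2 ⟨hne.symm, Finset.mem_univ _⟩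
  rw [Finset.add_sum_erase _ f hmem, Finset.add_sum_erase _ f (Finset.mem_univ i)]

lemma rk_swap {n : ℕ} (σ : Equiv.Perm (Fin n)) (i i' : Fin n)
    (hii : i < i') (hv : σ i < σ i') (a b : ℕ) :
    rk (σ * Equiv.swap i i') a b
      + (if (i:ℕ) < a ∧ a ≤ (i':ℕ) ∧ (σ i:ℕ) < b ∧ b ≤ (σ i':ℕ) then 1 else 0)
      = rk σ a b := by
  have hne : i ≠ i' := Fin.ne_of_lt hii
  unfold rk
  rw [sum_split2 hne (fun q => if (q : ℕ) < a ∧ ((σ * Equiv.swap i i') q : ℕ) < b then 1 else 0),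
    sum_split2 hne (fun q => if (q : ℕ) < a ∧ ((σ q : ℕ)) < b then 1 else 0)]
  have hsum : ∑ q ∈ (Finset.univ.erase i).erase i',
        (if (q : ℕ) < a ∧ ((σ * Equiv.swap i i') q : ℕ) < b then 1 else 0)
      = ∑ q ∈ (Finset.univ.erase i).erase i',
        (if (q : ℕ) < a ∧ (σ q : ℕ) < b then 1 else 0) := by
    refine Finset.sum_congr rfl (fun q hq => ?_)
    rw [Finset.mem_erase] at hq
    have hq2 := Finset.mem_erase.1 hq.2
    rw [mul_swap_other σ hq2.1 hq.1]
  simp only [hsum, mul_swap_left, mul_swap_right]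
  have hiv : (i:ℕ) < (i':ℕ) := hii
  have hvv : ((σ i):ℕ) < ((σ i'):ℕ) := hv
  split_ifs <;> omega

lemma bruhatStep_iff {n : ℕ} (σ : Equiv.Perm (Fin n)) (Q : Fin n → Fin n → ℤ) :
    BruhatStep (PermMat σ) Q
      ↔ ∃ i i' : Fin n, i < i' ∧ σ i < σ i' ∧ Q = PermMat (σ * Equiv.swap i i') := by
  constructor
  · rintro ⟨i, i', j, j', hii, hjj, p1, p2, p3, p4, q1, q2, q3, q4, hoff⟩
    have hσi : σ i = j := by
      by_contra h; simp [PermMat, h] at p1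
    have hσi' : σ i' = j' := by
      by_contra h; simp [PermMat, h] at p4
    have hne : i ≠ i' := Fin.ne_of_lt hii
    have hjne : j ≠ j' := Fin.ne_of_lt hjj
    refine ⟨i, i', hii, by rw [hσi, hσi']; exact hjj, ?_⟩
    funext a b
    rcases eq_or_ne a i with rfl | hai
    · simp only [PermMat, mul_swap_left, hσi']
      rcases eq_or_ne b j with rfl | hbj
      · rw [q1, if_neg (fun h => hjne (h.symm))]
      · rcases eq_or_ne b j' with rfl | hbj'
        · rw [q2, if_pos rfl]
        · rw [hoff a b (by tauto), PermMat, hσi,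
            if_neg (fun h => hbj h.symm), if_neg (fun h => hbj' h.symm)]
    · rcases eq_or_ne a i' with rfl | hai'
      · simp only [PermMat, mul_swap_right, hσi]
        rcases eq_or_ne b j with rfl | hbj
        · rw [q3, if_pos rfl]
        · rcases eq_or_ne b j' with rfl | hbj'
          · rw [q4, if_neg (fun h => hjne h)]
          · rw [hoff a b (by tauto), PermMat, hσi',
              if_neg (fun h => hbj' h.symm), if_neg (fun h => hbj h.symm)]
      · rw [hoff a b (by tauto)]
        simp only [PermMat, mul_swap_other σ hai hai']
  · rintro ⟨i, i', hii, hvv, rfl⟩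
    have hne : i ≠ i' := Fin.ne_of_lt hii
    have hvne : σ i ≠ σ i' := fun h => hne (σ.injective h)
    refine ⟨i, i', σ i, σ i', hii, hvv, ?_, ?_, ?_, ?_, ?_, ?_, ?_, ?_, ?_⟩
    · simp [PermMat]
    · simp [PermMat, hvne]
    · simp [PermMat, hvne.symm]
    · simp [PermMat]
    · simp [PermMat, mul_swap_left, hvne.symm]
    · simp [PermMat, mul_swap_left]
    · simp [PermMat, mul_swap_right]
    · simp [PermMat, mul_swap_right, hvne]
    · intro a b hab
      push_neg at hab
      rcases eq_or_ne a i with rfl | hai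
      · obtain ⟨hb1, hb2⟩ := hab (Or.inl rfl)
        simp only [PermMat, mul_swap_left]
        rw [if_neg (fun h => hb2 h.symm), if_neg (fun h => hb1 h.symm)]
      · rcases eq_or_ne a i' with rfl | hai'
        · obtain ⟨hb1, hb2⟩ := hab (Or.inr rfl)
          simp only [PermMat, mul_swap_right]
          rw [if_neg (fun h => hb1 h.symm), if_neg (fun h => hb2 h.symm)]
        · simp only [PermMat, mul_swap_other σ hai hai']


/-- Forward: a Bruhat chain only decreases the rank function. -/
lemma bruhat_to_dom {n : ℕ} (σ : Equiv.Perm (Fin n)) (Q : Fin n → Fin n → ℤ)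
    (h : Bruhat (PermMat σ) Q) :
    ∃ τ : Equiv.Perm (Fin n), Q = PermMat τ ∧ ∀ a b : ℕ, rk τ a b ≤ rk σ a b := by
  induction h with
  | refl => exact ⟨σ, rfl, fun a b => le_rfl⟩
  | tail _ hstep ih =>
    obtain ⟨τ, rfl, hle⟩ := ih
    obtain ⟨i, i', hii, hv, rfl⟩ := (bruhatStep_iff τ _).1 hstep
    refine ⟨τ * Equiv.swap i i', rfl, fun a b => ?_⟩
    have := rk_swap τ i i' hii hv a b
    have := hle a b
    omega

section Key
variable {n : ℕ} (σ τ : Equiv.Perm (Fin n))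

/-- the key strictness lemma -/
lemma key_lemma (hdom : ∀ a b : ℕ, rk τ a b ≤ rk σ a b)
    (i i' : Fin n)
    (hmin : ∀ q : Fin n, q < i → σ q = τ q)
    (hσilt : (σ i : ℕ) < (τ i : ℕ))
    (hii : i < i')
    (hband : (σ i : ℕ) < (σ i' : ℕ) ∧ (σ i' : ℕ) ≤ (τ i : ℕ))
    (hmini' : ∀ q : Fin n, i < q → q < i' → ¬((σ i : ℕ) < (σ q : ℕ) ∧ (σ q : ℕ) ≤ (τ i : ℕ)))
    (a b : ℕ) (ha1 : (i:ℕ) < a) (ha2 : a ≤ (i':ℕ)) (hb1 : (σ i:ℕ) < b) (hb2 : b ≤ (σ i':ℕ)) :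
    rk τ a b + 1 ≤ rk σ a b := by
  set c : ℕ := (τ i : ℕ) + 1 with hc
  have hterm : ∀ q : Fin n,
      (if (q:ℕ) < a ∧ (τ q:ℕ) < b then 1 else 0) + (if (q:ℕ) < a ∧ (σ q:ℕ) < c then 1 else 0)
        + (if q = i then 1 else 0)
      ≤ (if (q:ℕ) < a ∧ (σ q:ℕ) < b then 1 else 0) + (if (q:ℕ) < a ∧ (τ q:ℕ) < c then 1 else 0) := by
    intro q
    rcases lt_trichotomy q i with hq | rfl | hq
    · have heq : σ q = τ q := hmin q hq
      rw [heq, if_neg (Fin.ne_of_lt hq)]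
      omega
    · rw [if_pos rfl]
      have hia : (q:ℕ) < a := ha1
      have hb2' : b ≤ (τ q : ℕ) := le_trans hb2 hband.2
      split_ifs <;> omega
    · rw [if_neg (Fin.ne_of_gt hq)]
      by_cases hqa : (q:ℕ) < a
      · have hqi : (i:ℕ) < (q:ℕ) := hq
        have hqi' : (q:ℕ) < (i':ℕ) := by omega
        have hnb := hmini' q hq (by rw [Fin.lt_def]; exact hqi')
        -- σ q < c → σ q < b ; τ q < b → τ q < c
        split_ifs <;> omega
      · simp only [hqa, false_and, if_false]
        omega
  have hsum := Finset.sum_le_sum (fun q (_ : q ∈ Finset.univ) => hterm q)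
  rw [Finset.sum_add_distrib, Finset.sum_add_distrib, Finset.sum_add_distrib] at hsum
  have hone : (∑ q : Fin n, if q = i then 1 else 0) = 1 := by
    rw [Finset.sum_ite_eq' Finset.univ i (fun _ => 1)]
    simp
  rw [hone] at hsum
  have h1 : (∑ q : Fin n, if (q:ℕ) < a ∧ (τ q:ℕ) < b then 1 else 0) = rk τ a b := rfl
  have h2 : (∑ q : Fin n, if (q:ℕ) < a ∧ (σ q:ℕ) < b then 1 else 0) = rk σ a b := rfl
  have h3 : (∑ q : Fin n, if (q:ℕ) < a ∧ (σ q:ℕ) < c then 1 else 0) = rk σ a c := rfl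
  have h4 : (∑ q : Fin n, if (q:ℕ) < a ∧ (τ q:ℕ) < c then 1 else 0) = rk τ a c := rfl
  rw [h1, h2, h3, h4] at hsum
  have := hdom a c
  omega

end Key


lemma first_diff_lt {n : ℕ} (σ τ : Equiv.Perm (Fin n))
    (hdom : ∀ a b : ℕ, rk τ a b ≤ rk σ a b) (i : Fin n)
    (hmin : ∀ q : Fin n, q < i → σ q = τ q) (hne : σ i ≠ τ i) :
    (σ i : ℕ) < (τ i : ℕ) := by
  set a : ℕ := (i:ℕ) + 1 with ha
  set b : ℕ := (τ i:ℕ) + 1 with hb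
  have hterm : ∀ q : Fin n,
      (if (q:ℕ) < a ∧ (τ q:ℕ) < b then 1 else 0) + (if q = i ∧ (σ i:ℕ) < b then 1 else 0)
      = (if (q:ℕ) < a ∧ (σ q:ℕ) < b then 1 else 0) + (if q = i then 1 else 0) := by
    intro q
    rcases eq_or_ne q i with rfl | hqi
    · simp only [eq_self_iff_true, true_and, if_true]
      split_ifs <;> omega
    · simp only [if_neg (fun h : q = i ∧ (σ i:ℕ) < b => hqi h.1), if_neg hqi]
      rcases lt_trichotomy q i with hq | hq | hq
      · rw [hmin q hq]
      · exact absurd hq hqi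
      · have hgt : (i:ℕ) < (q:ℕ) := hq
        have hqa : ¬ ((q:ℕ) < a) := by omega
        simp only [if_neg (fun h : (q:ℕ) < a ∧ (τ q:ℕ) < b => hqa h.1),
          if_neg (fun h : (q:ℕ) < a ∧ (σ q:ℕ) < b => hqa h.1)]
  have hsum := Finset.sum_congr rfl (fun q (_ : q ∈ Finset.univ) => hterm q)
  rw [Finset.sum_add_distrib, Finset.sum_add_distrib] at hsum
  have hone : (∑ q : Fin n, if q = i then 1 else 0) = 1 := by
    rw [Finset.sum_ite_eq' Finset.univ i (fun _ => 1)]; simp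
  have htwo : (∑ q : Fin n, if q = i ∧ (σ i:ℕ) < b then 1 else 0)
      = if (σ i:ℕ) < b then 1 else 0 := by
    by_cases h : (σ i:ℕ) < b
    · simp only [h, and_true]
      rw [Finset.sum_ite_eq' Finset.univ i (fun _ => 1)]; simp
    · simp [h]
  rw [hone, htwo] at hsum
  have hd := hdom a b
  have h1 : (∑ q : Fin n, if (q:ℕ) < a ∧ (τ q:ℕ) < b then 1 else 0) = rk τ a b := rfl
  have h2 : (∑ q : Fin n, if (q:ℕ) < a ∧ (σ q:ℕ) < b then 1 else 0) = rk σ a b := rfl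
  rw [h1, h2] at hsum
  have hvne : (σ i : ℕ) ≠ (τ i : ℕ) := fun h => hne (Fin.ext h)
  by_cases h : (σ i:ℕ) < b
  · omega
  · rw [if_neg h] at hsum
    omega

lemma exists_step {n : ℕ} (σ τ : Equiv.Perm (Fin n))
    (hdom : ∀ a b : ℕ, rk τ a b ≤ rk σ a b) (hne : σ ≠ τ) :
    ∃ i i' : Fin n, i < i' ∧ σ i < σ i' ∧
      (∀ a b : ℕ, rk τ a b ≤ rk (σ * Equiv.swap i i') a b) ∧
      (∀ a b : ℕ, rk (σ * Equiv.swap i i') a b ≤ rk σ a b) ∧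
      rk (σ * Equiv.swap i i') (i':ℕ) ((σ i':ℕ)) < rk σ (i':ℕ) ((σ i':ℕ)) := by
  have hS : (Finset.univ.filter (fun q : Fin n => σ q ≠ τ q)).Nonempty := by
    by_contra h
    rw [Finset.not_nonempty_iff_eq_empty, Finset.filter_eq_empty_iff] at h
    exact hne (Equiv.ext (fun q => not_not.1 (h (Finset.mem_univ q))))
  set i := (Finset.univ.filter (fun q : Fin n => σ q ≠ τ q)).min' hS with hi
  have hiS : σ i ≠ τ i := by
    have := (Finset.univ.filter (fun q : Fin n => σ q ≠ τ q)).min'_mem hS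
    rw [Finset.mem_filter] at this
    exact this.2
  have hmin : ∀ q : Fin n, q < i → σ q = τ q := by
    intro q hq
    by_contra h
    have : i ≤ q := Finset.min'_le _ q (Finset.mem_filter.2 ⟨Finset.mem_univ q, h⟩)
    exact absurd hq (not_lt.2 this)
  have hσilt : (σ i : ℕ) < (τ i : ℕ) := first_diff_lt σ τ hdom i hmin hiS
  -- candidate set for i'
  have hq0 : σ (σ.symm (τ i)) = τ i := σ.apply_symm_apply _
  have hq0i : i < σ.symm (τ i) := by
    rcases lt_trichotomy (σ.symm (τ i)) i with h | h | h
    · exfalso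
      have heq := hmin _ h
      have : σ.symm (τ i) = i := τ.injective (by rw [← heq, hq0])
      exact absurd this (Fin.ne_of_lt h)
    · exfalso
      apply hiS
      rw [← hq0, h]
    · exact h
  have hT : (Finset.univ.filter
      (fun q : Fin n => i < q ∧ (σ i : ℕ) < (σ q : ℕ) ∧ (σ q : ℕ) ≤ (τ i : ℕ))).Nonempty := by
    refine ⟨σ.symm (τ i), Finset.mem_filter.2 ⟨Finset.mem_univ _, hq0i, ?_, ?_⟩⟩
    · rw [hq0]; exact hσilt
    · rw [hq0]
  set i' := (Finset.univ.filter
      (fun q : Fin n => i < q ∧ (σ i : ℕ) < (σ q : ℕ) ∧ (σ q : ℕ) ≤ (τ i : ℕ))).min' hT with hi'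
  have hi'mem := (Finset.univ.filter
      (fun q : Fin n => i < q ∧ (σ i : ℕ) < (σ q : ℕ) ∧ (σ q : ℕ) ≤ (τ i : ℕ))).min'_mem hT
  rw [Finset.mem_filter] at hi'mem
  obtain ⟨-, hii, hb1, hb2⟩ := hi'mem
  have hmini' : ∀ q : Fin n, i < q → q < i' →
      ¬((σ i : ℕ) < (σ q : ℕ) ∧ (σ q : ℕ) ≤ (τ i : ℕ)) := by
    intro q h1 h2 hc
    have : i' ≤ q := Finset.min'_le _ q (Finset.mem_filter.2 ⟨Finset.mem_univ q, h1, hc⟩)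
    exact absurd h2 (not_lt.2 this)
  have hv : σ i < σ i' := hb1
  have hkey := key_lemma σ τ hdom i i' hmin hσilt hii ⟨hb1, hb2⟩ hmini'
  refine ⟨i, i', hii, hv, ?_, ?_, ?_⟩
  · intro a b
    have hs := rk_swap σ i i' hii hv a b
    by_cases h : (i:ℕ) < a ∧ a ≤ (i':ℕ) ∧ (σ i:ℕ) < b ∧ b ≤ (σ i':ℕ)
    · have := hkey a b h.1 h.2.1 h.2.2.1 h.2.2.2
      rw [if_pos h] at hs
      omega
    · rw [if_neg h] at hs
      have := hdom a b
      omega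
  · intro a b
    have hs := rk_swap σ i i' hii hv a b
    split_ifs at hs <;> omega
  · have hiv : (i:ℕ) < (i':ℕ) := hii
    have hvv : (σ i:ℕ) < (σ i':ℕ) := hv
    have hs := rk_swap σ i i' hii hv (i':ℕ) ((σ i':ℕ))
    rw [if_pos ⟨hiv, le_rfl, hvv, le_rfl⟩] at hs
    omega


lemma dom_to_bruhat_aux {n : ℕ} (τ : Equiv.Perm (Fin n)) :
    ∀ N : ℕ, ∀ σ : Equiv.Perm (Fin n), meas σ τ ≤ N →
      (∀ a b : ℕ, rk τ a b ≤ rk σ a b) → Bruhat (PermMat σ) (PermMat τ) := by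
  intro N
  induction N with
  | zero =>
    intro σ hM hdom
    rcases eq_or_ne σ τ with rfl | hne
    · exact Relation.ReflTransGen.refl
    · exfalso
      obtain ⟨i, i', hii, hv, h1, h2, h3⟩ := exists_step σ τ hdom hne
      have hmem_a : (i':ℕ) ∈ Finset.range (n+1) := Finset.mem_range.2 (by have := i'.isLt; omega)
      have hmem_b : ((σ i':ℕ)) ∈ Finset.range (n+1) :=
        Finset.mem_range.2 (by have := (σ i').isLt; omega)
      have hlt : meas (σ * Equiv.swap i i') τ < meas σ τ := by
        apply Finset.sum_lt_sum
        · intro a _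
          apply Finset.sum_le_sum
          intro b _
          have := h1 a b; have := h2 a b; have := hdom a b
          omega
        · refine ⟨(i':ℕ), hmem_a, ?_⟩
          apply Finset.sum_lt_sum
          · intro b _
            have := h1 (i':ℕ) b; have := h2 (i':ℕ) b; have := hdom (i':ℕ) b
            omega
          · refine ⟨(σ i':ℕ), hmem_b, ?_⟩
            have := h1 (i':ℕ) ((σ i':ℕ)); have := hdom (i':ℕ) ((σ i':ℕ))
            omega
      omega
  | succ N ih =>
    intro σ hM hdom
    rcases eq_or_ne σ τ with rfl | hne
    · exact Relation.ReflTransGen.refl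
    · obtain ⟨i, i', hii, hv, h1, h2, h3⟩ := exists_step σ τ hdom hne
      have hmem_a : (i':ℕ) ∈ Finset.range (n+1) := Finset.mem_range.2 (by have := i'.isLt; omega)
      have hmem_b : ((σ i':ℕ)) ∈ Finset.range (n+1) :=
        Finset.mem_range.2 (by have := (σ i').isLt; omega)
      have hlt : meas (σ * Equiv.swap i i') τ < meas σ τ := by
        apply Finset.sum_lt_sum
        · intro a _
          apply Finset.sum_le_sum
          intro b _
          have := h1 a b; have := h2 a b; have := hdom a b
          omega
        · refine ⟨(i':ℕ), hmem_a, ?_⟩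
          apply Finset.sum_lt_sum
          · intro b _
            have := h1 (i':ℕ) b; have := h2 (i':ℕ) b; have := hdom (i':ℕ) b
            omega
          · refine ⟨(σ i':ℕ), hmem_b, ?_⟩
            have := h1 (i':ℕ) ((σ i':ℕ)); have := hdom (i':ℕ) ((σ i':ℕ))
            omega
      have hstep : BruhatStep (PermMat σ) (PermMat (σ * Equiv.swap i i')) :=
        (bruhatStep_iff σ _).2 ⟨i, i', hii, hv, rfl⟩
      exact Relation.ReflTransGen.head hstep (ih (σ * Equiv.swap i i') (by omega) h1)


lemma permMat_inj {n : ℕ} {σ τ : Equiv.Perm (Fin n)} (h : PermMat σ = PermMat τ) : σ = τ := by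
  apply Equiv.ext
  intro q
  have h1 := congrFun (congrFun h q) (σ q)
  simp only [PermMat, if_pos rfl] at h1
  by_contra hc
  rw [if_pos trivial, if_neg (fun hh : τ q = σ q => hc hh.symm)] at h1
  exact one_ne_zero h1

/-- distance-product criterion for Bruhat comparability:
`P_A` is below `P_B` in the Bruhat order iff `(P_A^R)^Σ ⊙ P_B^Σ = (Id^R)^Σ`. -/
theorem bruhat_iff_distProd {n : ℕ} (σA σB : Equiv.Perm (Fin n)) :
    Bruhat (PermMat σA) (PermMat σB) ↔
      ∀ i k : Fin (n+1),
        distProd (distSum (rot (PermMat σA))) (distSum (PermMat σB)) i k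
          = distSum (IdR n) i k := by
  constructor
  · intro h
    apply (distProd_iff_dom σA σB).2
    obtain ⟨τ, hQ, hle⟩ := bruhat_to_dom σA _ h
    have hτ : τ = σB := permMat_inj hQ.symm
    subst hτ
    exact hle
  · intro h
    exact dom_to_bruhat_aux σB (meas σA σB) σA le_rfl ((distProd_iff_dom σA σB).1 h)
end

section
/- Seaweed matrix composition for string concatenation (string-substring component): for strings a = a'a'' and b of length n, the string-substring seaweed matrices satisfy P^{⊔}_{a,b} = P^{⊔}_{a',b} ⊡ P^{⊔}_{a'',b}, i.e. (P^{⊔}_{a',b})^Σ ⊙ (P^{⊔}_{a'',b})^Σ = (P^{⊔}_{a,b})^Σ, where ⊙ is the distance product over the middle index range [0:n]. -/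
/-- A subpermutation matrix: a 0-1 matrix with at most one nonzero in
every row and every column. -/
def IsSubperm {n : ℕ} (P : Fin n → Fin n → ℤ) : Prop :=
  (∀ i j, P i j = 0 ∨ P i j = 1) ∧ (∀ i, ∑ j, P i j ≤ 1) ∧ (∀ j, ∑ i, P i j ≤ 1)

/-- The LCS score of two strings. -/
def lcsNat {α : Type*} [DecidableEq α] : List α → List α → ℕ
  | [], _ => 0
  | _ :: _, [] => 0
  | x :: xs, y :: ys =>
      max (max (lcsNat (x :: xs) ys) (lcsNat xs (y :: ys)))
        ((if y = x then 1 else 0) + lcsNat xs ys)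
termination_by a b => a.length + b.length

/-- The string-substring score matrix `H^{⊔}_{x,b}(i,j)`: the LCS score of
`x` against `b⟨i:j⟩` for `i ≤ j`, and `j − i` for `j < i`. -/
def Hss {α : Type*} [DecidableEq α] (x b : List α) (i j : ℕ) : ℤ :=
  if i ≤ j then (lcsNat x ((b.drop i).take (j - i)) : ℤ) else (j : ℤ) - i

/-! ### Auxiliary lemmas about `lcsNat` -/

theorem lcs_ge {α : Type*} [DecidableEq α] :
    ∀ (x y z : List α), z.Sublist x → z.Sublist y → z.length ≤ lcsNat x y
  | _, _, [], _, _ => Nat.zero_le _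
  | [], _, _::_, hzx, _ => by simp at hzx
  | _::_, [], _::_, _, hzy => by simp at hzy
  | a::xs, b::ys, c::cs, hzx, hzy => by
    rw [lcsNat]
    cases hzy with
    | cons _ h =>
      have := lcs_ge (a::xs) ys (c::cs) hzx h
      omega
    | cons_cons _ h =>
      cases hzx with
      | cons _ h' =>
        have := lcs_ge xs (b::ys) (b::cs) h' (h.cons₂ b)
        omega
      | cons_cons _ h' =>
        have := lcs_ge xs ys cs h' h
        have hbb : (if a = a then 1 else 0) = 1 := if_pos rfl
        rw [hbb]
        simp only [List.length_cons]
        omega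
termination_by x y z => x.length + y.length

theorem lcs_exists {α : Type*} [DecidableEq α] :
    ∀ (x y : List α), ∃ z : List α, z.Sublist x ∧ z.Sublist y ∧ z.length = lcsNat x y
  | [], y => ⟨[], List.nil_sublist _, List.nil_sublist _, by rw [lcsNat]; rfl⟩
  | a::xs, [] => ⟨[], List.nil_sublist _, List.nil_sublist _, by rw [lcsNat]; rfl⟩
  | a::xs, b::ys => by
    obtain ⟨z1, h1a, h1b, h1c⟩ := lcs_exists (a::xs) ys
    obtain ⟨z2, h2a, h2b, h2c⟩ := lcs_exists xs (b::ys)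
    obtain ⟨z3, h3a, h3b, h3c⟩ := lcs_exists xs ys
    rw [lcsNat]
    by_cases hba : b = a
    · subst hba
      have hbb : (if b = b then 1 else 0) = 1 := if_pos rfl
      rw [hbb]
      rcases le_total (max (lcsNat (b::xs) ys) (lcsNat xs (b::ys))) (1 + lcsNat xs ys)
        with hm | hm
      · refine ⟨b::z3, h3a.cons₂ b, h3b.cons₂ b, ?_⟩
        simp only [List.length_cons, h3c]
        omega
      · rcases le_total (lcsNat (b::xs) ys) (lcsNat xs (b::ys)) with h | h
        · exact ⟨z2, List.Sublist.cons _ h2a, h2b, by rw [h2c]; omega⟩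
        · exact ⟨z1, h1a, List.Sublist.cons _ h1b, by rw [h1c]; omega⟩
    · have hCB : lcsNat xs ys ≤ lcsNat xs (b::ys) :=
        h3c ▸ lcs_ge xs (b::ys) z3 h3a (List.Sublist.cons _ h3b)
      simp only [if_neg hba, Nat.zero_add]
      rcases le_total (lcsNat (a::xs) ys) (lcsNat xs (b::ys)) with h | h
      · exact ⟨z2, List.Sublist.cons _ h2a, h2b, by rw [h2c]; omega⟩
      · exact ⟨z1, h1a, List.Sublist.cons _ h1b, by rw [h1c]; omega⟩
termination_by x y => x.length + y.length

theorem lcs_nil_right {α : Type*} [DecidableEq α] (x : List α) : lcsNat x [] = 0 := by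
  cases x <;> rw [lcsNat]

theorem lcs_le_len {α : Type*} [DecidableEq α] (x y : List α) : lcsNat x y ≤ y.length := by
  obtain ⟨z, _, hzy, hz⟩ := lcs_exists x y
  exact hz ▸ hzy.length_le

theorem lcs_superadd {α : Type*} [DecidableEq α] (u u' v v' : List α) :
    lcsNat u v + lcsNat u' v' ≤ lcsNat (u ++ u') (v ++ v') := by
  obtain ⟨z, hzu, hzv, hz⟩ := lcs_exists u v
  obtain ⟨z', hzu', hzv', hz'⟩ := lcs_exists u' v'
  have := lcs_ge (u ++ u') (v ++ v') (z ++ z') (hzu.append hzu') (hzv.append hzv')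
  rw [List.length_append] at this
  omega

theorem lcs_le_left_append {α : Type*} [DecidableEq α] (u u' s : List α) :
    lcsNat u s ≤ lcsNat (u ++ u') s := by
  obtain ⟨z, hzu, hzs, hz⟩ := lcs_exists u s
  exact hz ▸ lcs_ge (u ++ u') s z (hzu.trans (List.sublist_append_left u u')) hzs

theorem lcs_le_right_append {α : Type*} [DecidableEq α] (u u' s : List α) :
    lcsNat u' s ≤ lcsNat (u ++ u') s := by
  obtain ⟨z, hzu, hzs, hz⟩ := lcs_exists u' s
  exact hz ▸ lcs_ge (u ++ u') s z (hzu.trans (List.sublist_append_right u u')) hzs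

theorem lcs_append_left_le {α : Type*} [DecidableEq α] (x v w : List α) :
    lcsNat x (v ++ w) ≤ v.length + lcsNat x w := by
  obtain ⟨z, hzx, hzvw, hz⟩ := lcs_exists x (v ++ w)
  obtain ⟨z1, z2, rfl, hz1, hz2⟩ := List.sublist_append_iff.mp hzvw
  have h2x : z2.Sublist x := (List.sublist_append_right z1 z2).trans hzx
  have := lcs_ge x w z2 h2x hz2
  have := hz1.length_le
  rw [List.length_append] at hz
  omega

theorem lcs_append_right_le {α : Type*} [DecidableEq α] (x v w : List α) :
    lcsNat x (v ++ w) ≤ lcsNat x v + w.length := by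
  obtain ⟨z, hzx, hzvw, hz⟩ := lcs_exists x (v ++ w)
  obtain ⟨z1, z2, rfl, hz1, hz2⟩ := List.sublist_append_iff.mp hzvw
  have h1x : z1.Sublist x := (List.sublist_append_left z1 z2).trans hzx
  have := lcs_ge x v z1 h1x hz1
  have := hz2.length_le
  rw [List.length_append] at hz
  omega

theorem lcs_split {α : Type*} [DecidableEq α] (u u' w : List α) :
    ∃ j ≤ w.length, lcsNat (u ++ u') w = lcsNat u (w.take j) + lcsNat u' (w.drop j) := by
  obtain ⟨z, hzu, hzw, hz⟩ := lcs_exists (u ++ u') w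
  obtain ⟨z1, z2, rfl, hz1, hz2⟩ := List.sublist_append_iff.mp hzu
  obtain ⟨w1, w2, rfl, hw1, hw2⟩ := List.append_sublist_iff.mp hzw
  refine ⟨w1.length, by simp, ?_⟩
  rw [List.take_left, List.drop_left]
  have ha := lcs_ge u w1 z1 hz1 hw1
  have hb := lcs_ge u' w2 z2 hz2 hw2
  have hc := lcs_superadd u u' w1 w2
  rw [List.length_append] at hz
  omega

/-! ### Composition of `Hss` -/

theorem Hss_add_le {α : Type*} [DecidableEq α] (a' a'' b : List α) (i j k : ℕ) :
    Hss a' b i j + Hss a'' b j k ≤ Hss (a' ++ a'') b i k := by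
  unfold Hss
  rcases le_or_gt i k with hik | hik
  · rw [if_pos hik]
    rcases le_or_gt i j with hij | hij
    · rw [if_pos hij]
      rcases le_or_gt j k with hjk | hjk
      · rw [if_pos hjk]
        have hseg : (b.drop i).take (k - i)
            = (b.drop i).take (j - i) ++ (b.drop j).take (k - j) := by
          rw [show k - i = (j - i) + (k - j) by omega, List.take_add, List.drop_drop,
            show i + (j - i) = j by omega]
        rw [hseg]
        exact_mod_cast lcs_superadd a' a'' _ _
      · rw [if_neg (show ¬ j ≤ k by omega)]
        have hseg : (b.drop i).take (j - i)
            = (b.drop i).take (k - i) ++ (b.drop k).take (j - k) := by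
          rw [show j - i = (k - i) + (j - k) by omega, List.take_add, List.drop_drop,
            show i + (k - i) = k by omega]
        have h1 := lcs_append_right_le a' ((b.drop i).take (k - i)) ((b.drop k).take (j - k))
        have h2 : ((b.drop k).take (j - k)).length ≤ j - k := by
          rw [List.length_take]; omega
        have h3 := lcs_le_left_append a' a'' ((b.drop i).take (k - i))
        rw [hseg]
        push_cast
        omega
    · rw [if_neg (show ¬ i ≤ j by omega), if_pos (show j ≤ k by omega)]
      have hseg : (b.drop j).take (k - j)
          = (b.drop j).take (i - j) ++ (b.drop i).take (k - i) := by
        rw [show k - j = (i - j) + (k - i) by omega, List.take_add, List.drop_drop,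
          show j + (i - j) = i by omega]
      have h1 := lcs_append_left_le a'' ((b.drop j).take (i - j)) ((b.drop i).take (k - i))
      have h2 : ((b.drop j).take (i - j)).length ≤ i - j := by
        rw [List.length_take]; omega
      have h3 := lcs_le_right_append a' a'' ((b.drop i).take (k - i))
      rw [hseg]
      push_cast
      omega
  · rw [if_neg (show ¬ i ≤ k by omega)]
    rcases le_or_gt i j with hij | hij
    · rw [if_pos hij, if_neg (show ¬ j ≤ k by omega)]
      have h1 := lcs_le_len a' ((b.drop i).take (j - i))
      have h2 : ((b.drop i).take (j - i)).length ≤ j - i := by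
        rw [List.length_take]; omega
      push_cast
      omega
    · rw [if_neg (show ¬ i ≤ j by omega)]
      rcases le_or_gt j k with hjk | hjk
      · rw [if_pos hjk]
        have h1 := lcs_le_len a'' ((b.drop j).take (k - j))
        have h2 : ((b.drop j).take (k - j)).length ≤ k - j := by
          rw [List.length_take]; omega
        push_cast
        omega
      · rw [if_neg (show ¬ j ≤ k by omega)]
        push_cast
        omega

theorem Hss_add_exists {α : Type*} [DecidableEq α] (a' a'' b : List α) {n : ℕ}
    (hb : b.length = n) {i k : ℕ} (hi : i ≤ n) (hk : k ≤ n) :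
    ∃ j ≤ n, Hss a' b i j + Hss a'' b j k = Hss (a' ++ a'') b i k := by
  rcases le_or_gt i k with hik | hik
  · obtain ⟨j0, hj0, hsplit⟩ := lcs_split a' a'' ((b.drop i).take (k - i))
    have hlen : ((b.drop i).take (k - i)).length = k - i := by
      rw [List.length_take, List.length_drop, hb]; omega
    rw [hlen] at hj0
    refine ⟨i + j0, by omega, ?_⟩
    unfold Hss
    rw [if_pos (show i ≤ i + j0 by omega), if_pos (show i + j0 ≤ k by omega), if_pos hik]
    have e1 : ((b.drop i).take (k - i)).take j0 = (b.drop i).take (i + j0 - i) := by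
      rw [List.take_take]
      congr 1
      omega
    have e2 : ((b.drop i).take (k - i)).drop j0 = (b.drop (i + j0)).take (k - (i + j0)) := by
      rw [List.drop_take, List.drop_drop]
      congr 1
      omega
    rw [e1, e2] at hsplit
    exact_mod_cast hsplit.symm
  · refine ⟨k, hk, ?_⟩
    unfold Hss
    have hneg : ¬ i ≤ k := by omega
    rw [if_neg hneg, if_pos le_rfl, if_neg hneg]
    simp [lcs_nil_right]

/-! ### Main theorem -/

/-- seaweed matrix composition for string concatenation:
if `P'`, `P''`, `P` are the string-substring seaweed matrices of `a'`, `a''`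
and `a = a'a''` against `b` respectively, then
`(P')^Σ ⊙ (P'')^Σ = P^Σ` (distance product over the middle range `[0:n]`). -/
theorem seaweed_composition {α : Type*} [DecidableEq α] {n : ℕ}
    (a' a'' b : List α) (hb : b.length = n)
    (P' P'' P : Fin n → Fin n → ℤ)
    (hP' : IsSubperm P') (hP'' : IsSubperm P'') (hP : IsSubperm P)
    (h1 : ∀ i j : Fin (n+1), Hss a' b i j = (j : ℕ) - (i : ℕ) - distSum P' i j)
    (h2 : ∀ i j : Fin (n+1), Hss a'' b i j = (j : ℕ) - (i : ℕ) - distSum P'' i j)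
    (h3 : ∀ i j : Fin (n+1), Hss (a' ++ a'') b i j = (j : ℕ) - (i : ℕ) - distSum P i j) :
    ∀ i k : Fin (n+1), distProd (distSum P') (distSum P'') i k = distSum P i k := by
  intro i k
  have key : ∀ j : Fin (n+1), distSum P' i j + distSum P'' j k
      = ((k : ℕ) : ℤ) - ((i : ℕ) : ℤ) - (Hss a' b i j + Hss a'' b j k) := by
    intro j
    have e1 := h1 i j
    have e2 := h2 j k
    linarith
  have hPk : distSum P i k = ((k : ℕ) : ℤ) - ((i : ℕ) : ℤ) - Hss (a' ++ a'') b i k := by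
    have := h3 i k
    linarith
  rw [distProd]
  apply le_antisymm
  · obtain ⟨j, hjn, hje⟩ := Hss_add_exists a' a'' b hb
      (Nat.lt_succ_iff.mp i.isLt) (Nat.lt_succ_iff.mp k.isLt)
    have hle := Finset.inf'_le (fun j : Fin (n+1) => distSum P' i j + distSum P'' j k)
      (Finset.mem_univ (⟨j, by omega⟩ : Fin (n+1)))
    rw [key ⟨j, by omega⟩] at hle
    simp only [Fin.val_mk] at hle
    rw [hje] at hle
    linarith [hle, hPk]
  · apply Finset.le_inf'
    intro j _
    rw [key j]
    have := Hss_add_le a' a'' b i j k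
    linarith
end
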